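/- Let A be a commutative ring with unity, let R₁,…,R_n be rectangles Rᵢ = [b₁ᵢ,b₂ᵢ)×[c₁ᵢ,c₂ᵢ), and let a₁,…,a_n ∈ A. Then ∑ᵢ aᵢ·𝟙_{Rᵢ} = 0 as a function ℝ² → A if and only if ∑ᵢ aᵢ·(X^{b₂ᵢ}−X^{b₁ᵢ})(Y^{c₂ᵢ}−Y^{c₁ᵢ}) = 0 in the group algebra A[X^ℝ,Y^ℝ]. Consequently the assignment T ↦ f_T is a well-defined injective A-linear map from the A-module of A-weighted tiles into A[X^ℝ,Y^ℝ]. -/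

import Mathlib

open Finset

/-- The element `(X^{b2} - X^{b1})(Y^{c2} - Y^{c1})` of the group algebra
`A[X^ℝ, Y^ℝ] = AddMonoidAlgebra A (ℝ × ℝ)`, where `X^σ Y^τ` is the monomial of
`(σ, τ)`. -/
noncomputable def fRect (A : Type*) [CommRing A] (b1 b2 c1 c2 : ℝ) :
    AddMonoidAlgebra A (ℝ × ℝ) :=
  (AddMonoidAlgebra.single (b2, 0) 1 - AddMonoidAlgebra.single (b1, 0) 1) *
    (AddMonoidAlgebra.single (0, c2) 1 - AddMonoidAlgebra.single (0, c1) 1)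

section Aux

variable {A : Type*} [CommRing A]

lemma fRect_apply (b1 b2 c1 c2 s t : ℝ) :
    (fRect A b1 b2 c1 c2).coeff (s, t) =
      ((if b2 = s then (1:A) else 0) - (if b1 = s then 1 else 0)) *
        ((if c2 = t then (1:A) else 0) - (if c1 = t then 1 else 0)) := by
  have h : ∀ u v : ℝ, (AddMonoidAlgebra.single ((u,v) : ℝ × ℝ) (1:A)).coeff (s,t)
      = (if u = s then (1:A) else 0) * (if v = t then 1 else 0) := by
    intro u v
    rw [AddMonoidAlgebra.coeff_single_apply]
    simp only [Prod.ext_iff, ite_and, mul_ite, mul_one, mul_zero]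
    split_ifs <;> rfl
  have e : fRect A b1 b2 c1 c2 =
      AddMonoidAlgebra.single (b2, c2) 1 - AddMonoidAlgebra.single (b1, c2) 1
        - AddMonoidAlgebra.single (b2, c1) 1 + AddMonoidAlgebra.single (b1, c1) 1 := by
    rw [fRect, sub_mul, mul_sub, mul_sub]
    simp only [AddMonoidAlgebra.single_mul_single, one_mul, Prod.mk_add_mk, add_zero, zero_add]
    abel
  have hsub : ∀ f g : AddMonoidAlgebra A (ℝ × ℝ), ∀ q, (f - g).coeff q = f.coeff q - g.coeff q := fun _ _ _ => rfl
  have hadd : ∀ f g : AddMonoidAlgebra A (ℝ × ℝ), ∀ q, (f + g).coeff q = f.coeff q + g.coeff q := fun _ _ _ => rfl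
  rw [e, hadd, hsub, hsub, h, h, h, h]
  ring

lemma exists_gap (U : Finset ℝ) (s : ℝ) : ∃ x, x < s ∧ ∀ u ∈ U, x < u → s ≤ u := by
  by_cases hne : (U.filter (· < s)).Nonempty
  · refine ⟨(U.filter (· < s)).max' hne, (Finset.mem_filter.mp (Finset.max'_mem _ hne)).2, ?_⟩
    intro u hu hx
    by_contra hlt
    push_neg at hlt
    exact absurd (Finset.le_max' (U.filter (· < s)) u (Finset.mem_filter.mpr ⟨hu, hlt⟩))
      (not_le.mpr hx)
  · refine ⟨s - 1, by linarith, ?_⟩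
    intro u hu hx
    by_contra hlt
    push_neg at hlt
    exact hne ⟨u, Finset.mem_filter.mpr ⟨hu, hlt⟩⟩

lemma eq_ind (u s x : ℝ) (hx : x < s) (hgap : x < u → s ≤ u) :
    (if u = s then (1:A) else 0) = (if x < u then 1 else 0) - (if s < u then 1 else 0) := by
  rcases eq_or_ne u s with rfl | hne
  · simp [hx]
  · rcases le_or_gt u x with h | h
    · rw [if_neg hne, if_neg (by linarith), if_neg (by linarith)]; ring
    · have := lt_of_le_of_ne (hgap h) (Ne.symm hne)
      rw [if_neg hne, if_pos (by linarith), if_pos this]; ring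

lemma ind_Ico (p1 p2 x : ℝ) (h : p1 < p2) :
    (if p1 ≤ x ∧ x < p2 then (1:A) else 0)
      = (if x < p2 then 1 else 0) - (if x < p1 then 1 else 0) := by
  rcases lt_or_ge x p1 with h1 | h1
  · rw [if_neg (by rintro ⟨a, b⟩; linarith), if_pos h1]
    rcases lt_or_ge x p2 with h2 | h2
    · rw [if_pos h2]; ring
    · linarith
  · rw [if_neg (not_lt.mpr h1)]
    rcases lt_or_ge x p2 with h2 | h2
    · rw [if_pos ⟨h1, h2⟩, if_pos h2]; ring
    · rw [if_neg (by rintro ⟨a, b⟩; linarith), if_neg (not_lt.mpr h2)]; ring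

lemma ind_rect (p1 p2 q1 q2 x y : ℝ) (hb : p1 < p2) (hc : q1 < q2) :
    (if p1 ≤ x ∧ x < p2 ∧ q1 ≤ y ∧ y < q2 then (1:A) else 0)
      = ((if x < p2 then (1:A) else 0) - if x < p1 then 1 else 0) *
        ((if y < q2 then (1:A) else 0) - if y < q1 then 1 else 0) := by
  rw [← ind_Ico p1 p2 x hb, ← ind_Ico q1 q2 y hc]
  by_cases h1 : p1 ≤ x ∧ x < p2 <;> by_cases h2 : q1 ≤ y ∧ y < q2 <;> simp [h1, h2]

lemma ind_lt_eq_sum (U : Finset ℝ) (u : ℝ) (hu : u ∈ U) (x : ℝ) :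
    (if x < u then (1:A) else 0)
      = ∑ s ∈ U, (if u = s then (1:A) else 0) * (if x < s then 1 else 0) := by
  simp only [ite_mul, one_mul, zero_mul]
  rw [Finset.sum_ite_eq U u (fun s => if x < s then (1:A) else 0)]
  simp [hu]

end Aux

/-- A finite weighted sum of indicators of rectangles vanishes identically on
`ℝ²` if and only if the corresponding element
`∑ aᵢ (X^{b2ᵢ} - X^{b1ᵢ})(Y^{c2ᵢ} - Y^{c1ᵢ})` of `A[X^ℝ, Y^ℝ]` is zero.
(Consequently `T ↦ f_T` is a well-defined injective `A`-linear map.) -/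
theorem tile_eq_zero_iff_poly_eq_zero (A : Type*) [CommRing A]
    (n : ℕ) (a : Fin n → A) (b1 b2 c1 c2 : Fin n → ℝ)
    (hb : ∀ i, b1 i < b2 i) (hc : ∀ i, c1 i < c2 i) :
    (∀ p : ℝ × ℝ, (∑ i, a i *
        (if b1 i ≤ p.1 ∧ p.1 < b2 i ∧ c1 i ≤ p.2 ∧ p.2 < c2 i then 1 else 0)) = 0)
      ↔ (∑ i, a i • fRect A (b1 i) (b2 i) (c1 i) (c2 i)) = 0 := by
  classical
  have happ : ∀ (g : Fin n → AddMonoidAlgebra A (ℝ × ℝ)) (q : ℝ × ℝ),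
      (∑ i, g i).coeff q = ∑ i, (g i).coeff q := fun g q => by
        rw [AddMonoidAlgebra.coeff_sum]; exact Finsupp.finset_sum_apply _ _ _
  have hsmul : ∀ (c : A) (f : AddMonoidAlgebra A (ℝ × ℝ)) (q : ℝ × ℝ),
      (c • f).coeff q = c * f.coeff q := fun _ _ _ => rfl
  -- rewrite the indicator sum in "difference of step functions" form
  have e : ∀ x y : ℝ,
      (∑ i, a i * (if b1 i ≤ x ∧ x < b2 i ∧ c1 i ≤ y ∧ y < c2 i then (1:A) else 0))
        = ∑ i, a i * (((if x < b2 i then (1:A) else 0) - if x < b1 i then 1 else 0) *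
            ((if y < c2 i then (1:A) else 0) - if y < c1 i then 1 else 0)) := by
    intro x y
    exact Finset.sum_congr rfl fun i _ => by
      rw [ind_rect (b1 i) (b2 i) (c1 i) (c2 i) x y (hb i) (hc i)]
  -- the right-hand side in coefficient form
  have hrhs : (∑ i, a i • fRect A (b1 i) (b2 i) (c1 i) (c2 i)) = 0 ↔
      ∀ s t : ℝ, (∑ i, a i * (((if b2 i = s then (1:A) else 0) - if b1 i = s then 1 else 0) *
          ((if c2 i = t then (1:A) else 0) - if c1 i = t then 1 else 0))) = 0 := by
    constructor
    · intro h s t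
      have h2 : (∑ i, a i • fRect A (b1 i) (b2 i) (c1 i) (c2 i)).coeff (s, t)
          = (0 : AddMonoidAlgebra A (ℝ × ℝ)).coeff (s, t) := by rw [h]
      rw [happ] at h2
      simp only [hsmul, fRect_apply] at h2
      simpa using h2
    · intro h
      apply AddMonoidAlgebra.coeff_injective
      apply Finsupp.ext
      rintro ⟨s, t⟩
      rw [happ]
      simp only [hsmul, fRect_apply]
      simpa using h s t
  rw [hrhs]
  set S : Finset ℝ := (Finset.univ.image b1) ∪ (Finset.univ.image b2) with hS
  set T : Finset ℝ := (Finset.univ.image c1) ∪ (Finset.univ.image c2) with hT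
  have hb1S : ∀ i, b1 i ∈ S := fun i =>
    Finset.mem_union_left _ (Finset.mem_image_of_mem b1 (Finset.mem_univ i))
  have hb2S : ∀ i, b2 i ∈ S := fun i =>
    Finset.mem_union_right _ (Finset.mem_image_of_mem b2 (Finset.mem_univ i))
  have hc1T : ∀ i, c1 i ∈ T := fun i =>
    Finset.mem_union_left _ (Finset.mem_image_of_mem c1 (Finset.mem_univ i))
  have hc2T : ∀ i, c2 i ∈ T := fun i =>
    Finset.mem_union_right _ (Finset.mem_image_of_mem c2 (Finset.mem_univ i))
  constructor
  · -- tile function vanishes → all coefficients vanish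
    intro hL s t
    obtain ⟨x, hx, hgx⟩ := exists_gap S s
    obtain ⟨y, hy, hgy⟩ := exists_gap T t
    have hF : ∀ z w : ℝ,
        (∑ i, a i * (((if z < b2 i then (1:A) else 0) - if z < b1 i then 1 else 0) *
            ((if w < c2 i then (1:A) else 0) - if w < c1 i then 1 else 0))) = 0 := by
      intro z w
      have h2 := hL (z, w)
      rwa [e z w] at h2
    calc (∑ i, a i * (((if b2 i = s then (1:A) else 0) - if b1 i = s then 1 else 0) *
            ((if c2 i = t then (1:A) else 0) - if c1 i = t then 1 else 0)))
        = ∑ i,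
            (a i * (((if x < b2 i then (1:A) else 0) - if x < b1 i then 1 else 0) *
                ((if y < c2 i then (1:A) else 0) - if y < c1 i then 1 else 0))
            - a i * (((if x < b2 i then (1:A) else 0) - if x < b1 i then 1 else 0) *
                ((if t < c2 i then (1:A) else 0) - if t < c1 i then 1 else 0))
            - a i * (((if s < b2 i then (1:A) else 0) - if s < b1 i then 1 else 0) *
                ((if y < c2 i then (1:A) else 0) - if y < c1 i then 1 else 0))
            + a i * (((if s < b2 i then (1:A) else 0) - if s < b1 i then 1 else 0) *
                ((if t < c2 i then (1:A) else 0) - if t < c1 i then 1 else 0))) := by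
          refine Finset.sum_congr rfl fun i _ => ?_
          rw [eq_ind (b2 i) s x hx (hgx _ (hb2S i)), eq_ind (b1 i) s x hx (hgx _ (hb1S i)),
            eq_ind (c2 i) t y hy (hgy _ (hc2T i)), eq_ind (c1 i) t y hy (hgy _ (hc1T i))]
          ring
      _ = 0 := by
          rw [Finset.sum_add_distrib, Finset.sum_sub_distrib, Finset.sum_sub_distrib,
            hF x y, hF x t, hF s y, hF s t]
          ring
  · -- all coefficients vanish → tile function vanishes
    intro hD p
    obtain ⟨x, y⟩ := p
    rw [e x y]
    calc (∑ i, a i * (((if x < b2 i then (1:A) else 0) - if x < b1 i then 1 else 0) *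
            ((if y < c2 i then (1:A) else 0) - if y < c1 i then 1 else 0)))
        = ∑ i, a i *
            ((∑ s ∈ S, ((if b2 i = s then (1:A) else 0) - if b1 i = s then 1 else 0) *
                (if x < s then 1 else 0)) *
             (∑ t ∈ T, ((if c2 i = t then (1:A) else 0) - if c1 i = t then 1 else 0) *
                (if y < t then 1 else 0))) := by
          refine Finset.sum_congr rfl fun i _ => ?_
          rw [ind_lt_eq_sum S (b2 i) (hb2S i) x, ind_lt_eq_sum S (b1 i) (hb1S i) x,
            ind_lt_eq_sum T (c2 i) (hc2T i) y, ind_lt_eq_sum T (c1 i) (hc1T i) y,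
            ← Finset.sum_sub_distrib, ← Finset.sum_sub_distrib]
          simp only [← sub_mul]
      _ = ∑ s ∈ S, ∑ t ∈ T,
            (∑ i, a i * (((if b2 i = s then (1:A) else 0) - if b1 i = s then 1 else 0) *
              ((if c2 i = t then (1:A) else 0) - if c1 i = t then 1 else 0))) *
            ((if x < s then (1:A) else 0) * (if y < t then 1 else 0)) := by
          calc (∑ i, a i *
                  ((∑ s ∈ S, ((if b2 i = s then (1:A) else 0) - if b1 i = s then 1 else 0) *
                      (if x < s then 1 else 0)) *
                   (∑ t ∈ T, ((if c2 i = t then (1:A) else 0) - if c1 i = t then 1 else 0) *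
                      (if y < t then 1 else 0))))
              = ∑ i, ∑ s ∈ S, ∑ t ∈ T, a i *
                  ((((if b2 i = s then (1:A) else 0) - if b1 i = s then 1 else 0) *
                      (if x < s then 1 else 0)) *
                   (((if c2 i = t then (1:A) else 0) - if c1 i = t then 1 else 0) *
                      (if y < t then 1 else 0))) := by
                refine Finset.sum_congr rfl fun i _ => ?_
                rw [Finset.sum_mul_sum]
                simp only [Finset.mul_sum]
            _ = ∑ s ∈ S, ∑ t ∈ T, ∑ i, a i *
                  ((((if b2 i = s then (1:A) else 0) - if b1 i = s then 1 else 0) *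
                      (if x < s then 1 else 0)) *
                   (((if c2 i = t then (1:A) else 0) - if c1 i = t then 1 else 0) *
                      (if y < t then 1 else 0))) := by
                rw [Finset.sum_comm]
                exact Finset.sum_congr rfl fun s _ => Finset.sum_comm
            _ = ∑ s ∈ S, ∑ t ∈ T,
                  (∑ i, a i * (((if b2 i = s then (1:A) else 0) - if b1 i = s then 1 else 0) *
                    ((if c2 i = t then (1:A) else 0) - if c1 i = t then 1 else 0))) *
                  ((if x < s then (1:A) else 0) * (if y < t then 1 else 0)) := by
                refine Finset.sum_congr rfl fun s _ => Finset.sum_congr rfl fun t _ => ?_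
                rw [Finset.sum_mul]
                exact Finset.sum_congr rfl fun i _ => by ring
      _ = 0 := by
          simp only [hD, zero_mul, Finset.sum_const_zero]
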